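/- arXiv:2212.01621 — 3 statements merged into one kernel-verified Lean document; each statement's English description precedes it below -/
import Mathlib

section
/- Let X be an ℝ^p-valued random vector and Y = (Y_1,…,Y_q) an ℝ^q-valued random vector with non-degenerate components, all defined on a common probability space. Then 0 ≤ T(Y|X) ≤ 1. -/
open MeasureTheory ProbabilityTheory

/-- Azadkia–Chatterjee's rank correlation `ξ(Y | m)` of a real random variable `Y`
given a sub-σ-algebra `m`. -/
noncomputable def xiSigma {Ω : Type*} (m : MeasurableSpace Ω) [MeasurableSpace Ω]
    (P : Measure Ω) (Y : Ω → ℝ) : ℝ :=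
  (∫ y, variance (P[Set.indicator {ω | y ≤ Y ω} (fun _ => (1 : ℝ)) | m]) P ∂(P.map Y)) /
  (∫ y, variance (Set.indicator {ω | y ≤ Y ω} (fun _ => (1 : ℝ))) P ∂(P.map Y))

/-- Azadkia–Chatterjee's rank correlation `ξ(Y | X)`: conditioning on the σ-algebra
generated by the random vector `X`. -/
noncomputable def xi {Ω α : Type*} [MeasurableSpace Ω] [MeasurableSpace α]
    (P : Measure Ω) (Y : Ω → ℝ) (X : Ω → α) : ℝ :=
  xiSigma (MeasurableSpace.comap X inferInstance) P Y

/-- The σ-algebra generated by the response variables with index `< i`,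
i.e. by `(Y_1, …, Y_{i-1})`; for `i = 0` it is the trivial σ-algebra `⊥`,
so that `xiSigma (sigmaPast Y 0) P (Y 0) = ξ(Y_1 | ∅) = 0`. -/
def sigmaPast {Ω : Type*} {q : ℕ} (Y : Fin q → Ω → ℝ) (i : Fin q) :
    MeasurableSpace Ω :=
  ⨆ j : Fin q, ⨆ _ : j < i, MeasurableSpace.comap (Y j) inferInstance

/-- The extension `T(Y | X)` of Azadkia–Chatterjee's rank correlation to a vector
`Y = (Y_1, …, Y_q)` of response variables, given the predictor vector `X`:
`T(Y|X) = 1 − (q − ∑_i ξ(Y_i | (X,Y_{i−1},…,Y_1))) / (q − ∑_i ξ(Y_i | (Y_{i−1},…,Y_1)))`. -/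
noncomputable def T {Ω α : Type*} [MeasurableSpace Ω] [MeasurableSpace α]
    (P : Measure Ω) {q : ℕ} (Y : Fin q → Ω → ℝ) (X : Ω → α) : ℝ :=
  1 - ((q : ℝ) - ∑ i, xiSigma (MeasurableSpace.comap X inferInstance ⊔ sigmaPast Y i) P (Y i)) /
      ((q : ℝ) - ∑ i, xiSigma (sigmaPast Y i) P (Y i))

/-- A real random variable is non-degenerate if it is not almost surely constant. -/
def Nondegenerate {Ω : Type*} [MeasurableSpace Ω] (P : Measure Ω) (Y : Ω → ℝ) : Prop :=
  ¬ ∃ c : ℝ, ∀ᵐ ω ∂P, Y ω = c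

section Aux

lemma my_variance_congr {Ω : Type*} {m0 : MeasurableSpace Ω} {P : Measure Ω}
    {f g : Ω → ℝ} (h : f =ᵐ[P] g) : variance f P = variance g P := by
  have hint : ∫ ω, f ω ∂P = ∫ ω, g ω ∂P := integral_congr_ae h
  rw [ProbabilityTheory.variance, ProbabilityTheory.variance, ProbabilityTheory.evariance,
    ProbabilityTheory.evariance]
  congr 1
  refine lintegral_congr_ae ?_
  filter_upwards [h] with ω hω
  rw [hω, hint]

lemma my_variance_const {Ω : Type*} {m0 : MeasurableSpace Ω} {P : Measure Ω}
    [IsProbabilityMeasure P] (c : ℝ) : variance (fun _ : Ω => c) P = 0 := by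
  rw [variance_eq_sub (memLp_const c)]
  simp

lemma my_condexp_mem_Icc {Ω : Type*} {m m0 : MeasurableSpace Ω} {P : Measure Ω}
    [IsProbabilityMeasure P] (hm : m ≤ m0) {g : Ω → ℝ}
    (hgi : Integrable g P) (hg : ∀ᵐ ω ∂P, g ω ∈ Set.Icc (0:ℝ) 1) :
    ∀ᵐ ω ∂P, (P[g|m]) ω ∈ Set.Icc (0:ℝ) 1 := by
  have h0 : 0 ≤ᵐ[P] P[g|m] := condExp_nonneg (hg.mono fun ω hω => hω.1)
  have h1 : P[g|m] ≤ᵐ[P] fun _ => (1:ℝ) := by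
    have := condExp_mono (m := m) hgi (integrable_const (1:ℝ)) (hg.mono fun ω hω => hω.2)
    rwa [condExp_const hm] at this
  filter_upwards [h0, h1] with ω hω0 hω1
  exact ⟨hω0, hω1⟩

lemma my_var_condexp_le {Ω : Type*} {m m0 : MeasurableSpace Ω} {P : Measure Ω}
    [IsProbabilityMeasure P] (hm : m ≤ m0) {g : Ω → ℝ}
    (hgi : Integrable g P) (hg : ∀ᵐ ω ∂P, g ω ∈ Set.Icc (0:ℝ) 1) :
    variance (P[g|m]) P ≤ variance g P := by
  haveI : IsFiniteMeasure (P.trim hm) := isFiniteMeasure_trim hm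
  set h := P[g|m] with hh
  have hsm : AEStronglyMeasurable h P := (stronglyMeasurable_condExp.mono hm).aestronglyMeasurable
  have hbnd : ∀ᵐ ω ∂P, h ω ∈ Set.Icc (0:ℝ) 1 := my_condexp_mem_Icc hm hgi hg
  have hmem_h : MemLp h 2 P := memLp_of_bounded hbnd hsm 2
  have hmem_g : MemLp g 2 P := memLp_of_bounded hg hgi.aestronglyMeasurable 2
  have hInt_hg : Integrable (h * g) P := by
    refine hgi.bdd_mul (c := 1) hsm ?_
    filter_upwards [hbnd] with ω hω
    rw [Real.norm_eq_abs, abs_le]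
    exact ⟨by linarith [hω.1], hω.2⟩
  have hInt_h2 : Integrable (fun ω => h ω ^ 2) P := hmem_h.integrable_sq
  have hInt_g2 : Integrable (fun ω => g ω ^ 2) P := hmem_g.integrable_sq
  have key : ∫ ω, (h * g) ω ∂P = ∫ ω, h ω ^ 2 ∂P := by
    have hpull : P[h * g|m] =ᵐ[P] h * h :=
      condExp_mul_of_stronglyMeasurable_left stronglyMeasurable_condExp hInt_hg hgi
    rw [← integral_condExp hm (f := h * g), integral_congr_ae hpull]
    refine integral_congr_ae (Filter.Eventually.of_forall fun ω => ?_)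
    simp [sq]
  have hL2 : ∫ ω, h ω ^ 2 ∂P ≤ ∫ ω, g ω ^ 2 ∂P := by
    have h0 : 0 ≤ ∫ ω, (g ω - h ω) ^ 2 ∂P := integral_nonneg fun ω => sq_nonneg _
    have hexp : ∫ ω, (g ω - h ω) ^ 2 ∂P
        = (∫ ω, g ω ^ 2 ∂P - 2 * ∫ ω, (h * g) ω ∂P) + ∫ ω, h ω ^ 2 ∂P := by
      calc ∫ ω, (g ω - h ω) ^ 2 ∂P
          = ∫ ω, (g ω ^ 2 - 2 * (h * g) ω) + h ω ^ 2 ∂P := by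
            refine integral_congr_ae (Filter.Eventually.of_forall fun ω => ?_)
            simp only [Pi.mul_apply]; ring
        _ = (∫ ω, (g ω ^ 2 - 2 * (h * g) ω) ∂P) + ∫ ω, h ω ^ 2 ∂P :=
            integral_add (hInt_g2.sub (hInt_hg.const_mul 2)) hInt_h2
        _ = (∫ ω, g ω ^ 2 ∂P - ∫ ω, 2 * (h * g) ω ∂P) + ∫ ω, h ω ^ 2 ∂P := by
            rw [integral_sub hInt_g2 (hInt_hg.const_mul 2)]
        _ = (∫ ω, g ω ^ 2 ∂P - 2 * ∫ ω, (h * g) ω ∂P) + ∫ ω, h ω ^ 2 ∂P := by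
            rw [integral_const_mul]
    rw [hexp, key] at h0
    linarith
  have hmean : ∫ ω, h ω ∂P = ∫ ω, g ω ∂P := integral_condExp hm
  rw [variance_eq_sub hmem_h, variance_eq_sub hmem_g]
  have e1 : ∫ ω, (h ^ 2) ω ∂P = ∫ ω, h ω ^ 2 ∂P := rfl
  have e2 : ∫ ω, (g ^ 2) ω ∂P = ∫ ω, g ω ^ 2 ∂P := rfl
  have e3 : (∫ ω, h ω ∂P) ^ 2 = (∫ ω, g ω ∂P) ^ 2 := by rw [hmean]
  simp only [e1, e2] at *
  linarith

lemma my_var_condExp_mono {Ω : Type*} {m₁ m₂ m0 : MeasurableSpace Ω} {P : Measure Ω}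
    [IsProbabilityMeasure P] (hm₁₂ : m₁ ≤ m₂) (hm₂ : m₂ ≤ m0) {g : Ω → ℝ}
    (hgi : Integrable g P) (hg : ∀ᵐ ω ∂P, g ω ∈ Set.Icc (0:ℝ) 1) :
    variance (P[g|m₁]) P ≤ variance (P[g|m₂]) P := by
  haveI : IsFiniteMeasure (P.trim hm₂) := isFiniteMeasure_trim hm₂
  have h2i : Integrable (P[g|m₂]) P := integrable_condExp
  have h2b := my_condexp_mem_Icc hm₂ hgi hg
  have h := my_var_condexp_le (hm₁₂.trans hm₂) h2i h2b
  rwa [my_variance_congr (condExp_condExp_of_le hm₁₂ hm₂)] at h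

end Aux

noncomputable section Aux2

/-- The indicator `1_{y ≤ Z}` as a real function. -/
def indF {Ω : Type*} (Z : Ω → ℝ) (y : ℝ) : Ω → ℝ :=
  Set.indicator {ω | y ≤ Z ω} (fun _ => (1:ℝ))

lemma indF_mem_Icc {Ω : Type*} (Z : Ω → ℝ) (y : ℝ) (ω : Ω) :
    indF Z y ω ∈ Set.Icc (0:ℝ) 1 := by
  rw [indF, Set.indicator_apply]
  split <;> simp

lemma indF_meas {Ω : Type*} {m0 : MeasurableSpace Ω} {Z : Ω → ℝ} (hZ : Measurable Z) (y : ℝ) :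
    Measurable (indF Z y) :=
  measurable_const.indicator (measurableSet_le measurable_const hZ)

lemma indF_integrable {Ω : Type*} {m0 : MeasurableSpace Ω} {P : Measure Ω}
    [IsProbabilityMeasure P] {Z : Ω → ℝ} (hZ : Measurable Z) (y : ℝ) :
    Integrable (indF Z y) P :=
  (memLp_of_bounded (Filter.Eventually.of_forall (indF_mem_Icc Z y))
    (indF_meas hZ y).aestronglyMeasurable 1).integrable le_rfl

lemma indF_anti {Ω : Type*} (Z : Ω → ℝ) {y₁ y₂ : ℝ} (h : y₁ ≤ y₂) (ω : Ω) :
    indF Z y₂ ω ≤ indF Z y₁ ω := by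
  simp only [indF, Set.indicator_apply, Set.mem_setOf_eq]
  by_cases h1 : y₁ ≤ Z ω
  · by_cases h2 : y₂ ≤ Z ω <;> simp [h1, h2]
  · have h2 : ¬ y₂ ≤ Z ω := fun hh => h1 (le_trans h hh)
    simp [h1, h2]

lemma indF_sq {Ω : Type*} (Z : Ω → ℝ) (y : ℝ) (ω : Ω) :
    indF Z y ω ^ 2 = indF Z y ω := by
  rw [indF, Set.indicator_apply]
  split <;> simp

/-- `F(y) = P(Z ≥ y)`. -/
def FF {Ω : Type*} (m0 : MeasurableSpace Ω) (P : Measure Ω) (Z : Ω → ℝ) (y : ℝ) : ℝ :=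
  ∫ ω, indF Z y ω ∂P

/-- `G_m(y) = ∫ (E[1_{y ≤ Z}|m])² dP`. -/
def GG {Ω : Type*} (m : MeasurableSpace Ω) (m0 : MeasurableSpace Ω) (P : Measure Ω)
    (Z : Ω → ℝ) (y : ℝ) : ℝ :=
  ∫ ω, (P[indF Z y|m]) ω ^ 2 ∂P

section

variable {Ω : Type*} {m m₁ m₂ m0 : MeasurableSpace Ω} {P : Measure Ω} [IsProbabilityMeasure P]
  {Z : Ω → ℝ}

lemma FF_anti (hZ : Measurable Z) : Antitone (FF m0 P Z) := fun y₁ y₂ h =>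
  integral_mono (indF_integrable hZ y₂) (indF_integrable hZ y₁) (indF_anti Z h)

lemma FF_mem_Icc (hZ : Measurable Z) (y : ℝ) : FF m0 P Z y ∈ Set.Icc (0:ℝ) 1 := by
  constructor
  · exact integral_nonneg fun ω => (indF_mem_Icc Z y ω).1
  · calc ∫ ω, indF Z y ω ∂P ≤ ∫ _ω, (1:ℝ) ∂P :=
          integral_mono (indF_integrable hZ y) (integrable_const 1)
            (fun ω => (indF_mem_Icc Z y ω).2)
      _ = 1 := by simp

lemma condexp_indF_mem_Icc (hm : m ≤ m0) (hZ : Measurable Z) (y : ℝ) :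
    ∀ᵐ ω ∂P, (P[indF Z y|m]) ω ∈ Set.Icc (0:ℝ) 1 :=
  my_condexp_mem_Icc hm (indF_integrable hZ y)
    (Filter.Eventually.of_forall (indF_mem_Icc Z y))

lemma condexp_indF_memℒp (hm : m ≤ m0) (hZ : Measurable Z) (y : ℝ) :
    MemLp (P[indF Z y|m]) 2 P :=
  memLp_of_bounded (condexp_indF_mem_Icc hm hZ y)
    (stronglyMeasurable_condExp.mono hm).aestronglyMeasurable 2

lemma GG_anti (hm : m ≤ m0) (hZ : Measurable Z) : Antitone (GG m m0 P Z) := by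
  intro y₁ y₂ h
  have hc : P[indF Z y₂|m] ≤ᵐ[P] P[indF Z y₁|m] :=
    condExp_mono (indF_integrable hZ y₂) (indF_integrable hZ y₁)
      (Filter.Eventually.of_forall (indF_anti Z h))
  have h0 : 0 ≤ᵐ[P] P[indF Z y₂|m] :=
    condExp_nonneg (Filter.Eventually.of_forall fun ω => (indF_mem_Icc Z y₂ ω).1)
  refine integral_mono_ae ((condexp_indF_memℒp hm hZ y₂).integrable_sq)
    ((condexp_indF_memℒp hm hZ y₁).integrable_sq) ?_
  filter_upwards [hc, h0] with ω h1 h2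
  exact pow_le_pow_left₀ h2 h1 2

lemma GG_mem_Icc (hm : m ≤ m0) (hZ : Measurable Z) (y : ℝ) :
    GG m m0 P Z y ∈ Set.Icc (0:ℝ) 1 := by
  constructor
  · exact integral_nonneg fun ω => sq_nonneg _
  · calc ∫ ω, (P[indF Z y|m]) ω ^ 2 ∂P ≤ ∫ _ω, (1:ℝ) ∂P := by
          refine integral_mono_ae ((condexp_indF_memℒp hm hZ y).integrable_sq)
            (integrable_const 1) ?_
          filter_upwards [condexp_indF_mem_Icc hm hZ y] with ω hω
          exact pow_le_one₀ hω.1 hω.2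
      _ = 1 := by simp

lemma var_condexp_indF_eq (hm : m ≤ m0) (hZ : Measurable Z) (y : ℝ) :
    variance (P[indF Z y|m]) P = GG m m0 P Z y - (FF m0 P Z y) ^ 2 := by
  haveI : IsFiniteMeasure (P.trim hm) := isFiniteMeasure_trim hm
  rw [variance_eq_sub (condexp_indF_memℒp hm hZ y)]
  congr 1
  rw [FF, ← integral_condExp hm (f := indF Z y)]

lemma var_indF_eq (hZ : Measurable Z) (y : ℝ) :
    variance (indF Z y) P = FF m0 P Z y - (FF m0 P Z y) ^ 2 := by
  rw [variance_eq_sub (memLp_of_bounded (Filter.Eventually.of_forall (indF_mem_Icc Z y))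
    (indF_meas hZ y).aestronglyMeasurable 2)]
  congr 1
  refine integral_congr_ae (Filter.Eventually.of_forall fun ω => ?_)
  exact indF_sq Z y ω

lemma var_condexp_indF_mem_Icc (hm : m ≤ m0) (hZ : Measurable Z) (y : ℝ) :
    variance (P[indF Z y|m]) P ∈ Set.Icc (0:ℝ) 1 := by
  constructor
  · exact variance_nonneg _ _
  · rw [var_condexp_indF_eq hm hZ y]
    calc GG m m0 P Z y - (FF m0 P Z y) ^ 2 ≤ GG m m0 P Z y := by
          nlinarith [sq_nonneg (FF m0 P Z y)]
      _ ≤ 1 := (GG_mem_Icc hm hZ y).2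

lemma integrable_var_condexp_indF (hm : m ≤ m0) (hZ : Measurable Z) :
    Integrable (fun y => variance (P[indF Z y|m]) P) (P.map Z) := by
  haveI : IsProbabilityMeasure (P.map Z) := Measure.isProbabilityMeasure_map hZ.aemeasurable
  have heq : (fun y => variance (P[indF Z y|m]) P)
      = fun y => GG m m0 P Z y - (FF m0 P Z y) ^ 2 :=
    funext fun y => var_condexp_indF_eq hm hZ y
  have hmeas : Measurable fun y => variance (P[indF Z y|m]) P := by
    rw [heq]
    exact ((GG_anti hm hZ).measurable).sub (((FF_anti hZ).measurable).pow_const 2)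
  exact (memLp_of_bounded
    (Filter.Eventually.of_forall fun y => var_condexp_indF_mem_Icc hm hZ y)
    hmeas.aestronglyMeasurable 1).integrable le_rfl

lemma integrable_var_indF (hZ : Measurable Z) :
    Integrable (fun y => variance (indF Z y) P) (P.map Z) := by
  haveI : IsProbabilityMeasure (P.map Z) := Measure.isProbabilityMeasure_map hZ.aemeasurable
  have heq : (fun y => variance (indF Z y) P)
      = fun y => FF m0 P Z y - (FF m0 P Z y) ^ 2 := funext fun y => var_indF_eq hZ y
  have hmeas : Measurable fun y => variance (indF Z y) P := by
    rw [heq]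
    exact ((FF_anti hZ).measurable).sub (((FF_anti hZ).measurable).pow_const 2)
  refine (memLp_of_bounded (a := (0:ℝ)) (b := 1) (Filter.Eventually.of_forall fun y => ?_)
    hmeas.aestronglyMeasurable 1).integrable le_rfl
  constructor
  · exact variance_nonneg _ _
  · rw [var_indF_eq hZ y]
    have h := FF_mem_Icc (P := P) hZ y
    nlinarith [h.1, h.2, sq_nonneg (FF m0 P Z y)]

lemma xiSigma_eq_div :
    xiSigma m P Z = (∫ y, variance (P[indF Z y|m]) P ∂(P.map Z)) /
      (∫ y, variance (indF Z y) P ∂(P.map Z)) := rfl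

lemma xiSigma_nonneg : 0 ≤ xiSigma m P Z := by
  rw [xiSigma_eq_div]
  exact div_nonneg (integral_nonneg fun y => variance_nonneg _ _)
    (integral_nonneg fun y => variance_nonneg _ _)

lemma xiSigma_le_one (hm : m ≤ m0) (hZ : Measurable Z) : xiSigma m P Z ≤ 1 := by
  rw [xiSigma_eq_div]
  refine div_le_one_of_le₀ ?_ (integral_nonneg fun y => variance_nonneg _ _)
  refine integral_mono (integrable_var_condexp_indF hm hZ) (integrable_var_indF hZ)
    fun y => ?_
  exact my_var_condexp_le hm (indF_integrable hZ y)
    (Filter.Eventually.of_forall (indF_mem_Icc Z y))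

lemma xiSigma_mono (hm₁₂ : m₁ ≤ m₂) (hm₂ : m₂ ≤ m0) (hZ : Measurable Z) :
    xiSigma m₁ P Z ≤ xiSigma m₂ P Z := by
  rw [xiSigma_eq_div, xiSigma_eq_div]
  rcases eq_or_lt_of_le (integral_nonneg (μ := P.map Z) (f := fun y => variance (indF Z y) P) fun y : ℝ => variance_nonneg (indF Z y) P) with hD | hD
  · rw [← hD, div_zero, div_zero]
  · rw [div_le_div_iff_of_pos_right hD]
    refine integral_mono (integrable_var_condexp_indF (hm₁₂.trans hm₂) hZ)
      (integrable_var_condexp_indF hm₂ hZ) fun y => ?_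
    exact my_var_condExp_mono hm₁₂ hm₂ (indF_integrable hZ y)
      (Filter.Eventually.of_forall (indF_mem_Icc Z y))

lemma xiSigma_bot : xiSigma (⊥ : MeasurableSpace Ω) P Z = 0 := by
  rw [xiSigma_eq_div]
  have hnum : (∫ y, variance (P[indF Z y|(⊥ : MeasurableSpace Ω)]) P ∂(P.map Z)) = 0 := by
    have : (fun y => variance (P[indF Z y|(⊥ : MeasurableSpace Ω)]) P) = fun _ => (0:ℝ) := by
      funext y
      rw [condExp_bot]
      exact my_variance_const _
    rw [this, integral_zero]
  rw [hnum, zero_div]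

end
end Aux2

section Main

variable {Ω : Type*} [MeasurableSpace Ω] {P : Measure Ω} [IsProbabilityMeasure P]

lemma sigmaPast_le {q : ℕ} {Y : Fin q → Ω → ℝ} (hY : ∀ i, Measurable (Y i)) (i : Fin q) :
    sigmaPast Y i ≤ ‹MeasurableSpace Ω› :=
  iSup_le fun j => iSup_le fun _ => (hY j).comap_le

lemma sigmaPast_zero {q : ℕ} (Y : Fin (q + 1) → Ω → ℝ) : sigmaPast Y 0 = ⊥ := by
  rw [sigmaPast]
  simp [Fin.not_lt_zero]

end Main

theorem T_mem_unit_interval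
    {Ω : Type*} [MeasurableSpace Ω] (P : Measure Ω) [IsProbabilityMeasure P]
    {p q : ℕ} (X : Ω → (Fin p → ℝ)) (Y : Fin q → Ω → ℝ)
    (hX : Measurable X) (hY : ∀ i, Measurable (Y i))
    (hnd : ∀ i, Nondegenerate P (Y i)) :
    0 ≤ T P Y X ∧ T P Y X ≤ 1 := by
  classical
  rcases q with _ | n
  · have hT : T P Y X = 1 := by simp [T]
    rw [hT]
    exact ⟨zero_le_one, le_refl 1⟩
  · have hpast_le : ∀ i, sigmaPast Y i ≤ ‹MeasurableSpace Ω› := sigmaPast_le hY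
    have hfull_le : ∀ i : Fin (n + 1),
        MeasurableSpace.comap X inferInstance ⊔ sigmaPast Y i ≤ ‹MeasurableSpace Ω› :=
      fun i => sup_le hX.comap_le (hpast_le i)
    have hp1 : ∀ i : Fin (n + 1), xiSigma (sigmaPast Y i) P (Y i) ≤ 1 :=
      fun i => xiSigma_le_one (hpast_le i) (hY i)
    have hf1 : ∀ i : Fin (n + 1),
        xiSigma (MeasurableSpace.comap X inferInstance ⊔ sigmaPast Y i) P (Y i) ≤ 1 :=
      fun i => xiSigma_le_one (hfull_le i) (hY i)
    have hpf : ∀ i : Fin (n + 1), xiSigma (sigmaPast Y i) P (Y i) ≤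
        xiSigma (MeasurableSpace.comap X inferInstance ⊔ sigmaPast Y i) P (Y i) :=
      fun i => xiSigma_mono le_sup_right (hfull_le i) (hY i)
    have hξp0 : xiSigma (sigmaPast Y (0 : Fin (n + 1))) P (Y 0) = 0 := by
      rw [sigmaPast_zero Y]
      exact xiSigma_bot
    have hSp_le : ∑ i, xiSigma (sigmaPast Y i) P (Y i) ≤ (n : ℝ) := by
      rw [Fin.sum_univ_succ, hξp0, zero_add]
      calc ∑ i : Fin n, xiSigma (sigmaPast Y i.succ) P (Y i.succ)
          ≤ ∑ _i : Fin n, (1 : ℝ) := Finset.sum_le_sum fun i _ => hp1 i.succ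
        _ = (n : ℝ) := by simp
    have hSf_le : ∑ i, xiSigma (MeasurableSpace.comap X inferInstance ⊔ sigmaPast Y i) P (Y i)
        ≤ (n : ℝ) + 1 := by
      calc ∑ i, xiSigma (MeasurableSpace.comap X inferInstance ⊔ sigmaPast Y i) P (Y i)
          ≤ ∑ _i : Fin (n + 1), (1 : ℝ) := Finset.sum_le_sum fun i _ => hf1 i
        _ = (n : ℝ) + 1 := by simp
    have hSpf : ∑ i, xiSigma (sigmaPast Y i) P (Y i)
        ≤ ∑ i, xiSigma (MeasurableSpace.comap X inferInstance ⊔ sigmaPast Y i) P (Y i) :=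
      Finset.sum_le_sum fun i _ => hpf i
    have hT : T P Y X =
        1 - (((n + 1 : ℕ) : ℝ) -
            ∑ i, xiSigma (MeasurableSpace.comap X inferInstance ⊔ sigmaPast Y i) P (Y i)) /
          (((n + 1 : ℕ) : ℝ) - ∑ i, xiSigma (sigmaPast Y i) P (Y i)) := rfl
    have hcast : ((n + 1 : ℕ) : ℝ) = (n : ℝ) + 1 := by push_cast; ring
    rw [hT, hcast]
    set Sf := ∑ i, xiSigma (MeasurableSpace.comap X inferInstance ⊔ sigmaPast Y i) P (Y i)
      with hSf
    set Sp := ∑ i, xiSigma (sigmaPast Y i) P (Y i) with hSp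
    have hB0 : (0 : ℝ) < (n : ℝ) + 1 - Sp := by linarith
    have hA0 : (0 : ℝ) ≤ (n : ℝ) + 1 - Sf := by linarith
    have hAB : (n : ℝ) + 1 - Sf ≤ (n : ℝ) + 1 - Sp := by linarith
    have hdiv0 : 0 ≤ ((n : ℝ) + 1 - Sf) / ((n : ℝ) + 1 - Sp) := div_nonneg hA0 hB0.le
    have hdiv1 : ((n : ℝ) + 1 - Sf) / ((n : ℝ) + 1 - Sp) ≤ 1 := (div_le_one hB0).mpr hAB
    constructor <;> linarith
end

section
/- Distributional invariance: let X = (X_1,…,X_p) be an ℝ^p-valued random vector and Y = (Y_1,…,Y_q) an ℝ^q-valued random vector with non-degenerate components, all defined on a common probability space. Then T(Y|X) = T(F_Y(Y) | F_X(X)), where F_X(X) := (F_{X_1}(X_1),…,F_{X_p}(X_p)) and F_Y(Y) := (F_{Y_1}(Y_1),…,F_{Y_q}(Y_q)) denote the componentwise applications of the marginal cumulative distribution functions. -/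
open MeasureTheory ProbabilityTheory

/-- The cumulative distribution function `F_W(w) = P(W ≤ w)` of a real random variable `W`. -/
noncomputable def cdf {Ω : Type*} [MeasurableSpace Ω] (P : Measure Ω) (W : Ω → ℝ) (w : ℝ) : ℝ :=
  (P {ω | W ω ≤ w}).toReal

namespace ACaux

open scoped symmDiff

lemma monotone_cdf {Ω : Type*} [MeasurableSpace Ω] (P : Measure Ω) [IsFiniteMeasure P]
    (W : Ω → ℝ) : Monotone (cdf P W) := by
  intro a b hab
  exact ENNReal.toReal_mono (measure_ne_top P _)
    (measure_mono (fun ω (h : W ω ≤ a) => le_trans h hab))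

lemma measurable_cdf {Ω : Type*} [MeasurableSpace Ω] (P : Measure Ω) [IsFiniteMeasure P]
    (W : Ω → ℝ) : Measurable (cdf P W) :=
  (monotone_cdf P W).measurable

variable {Ω : Type*} [MeasurableSpace Ω] {P : Measure Ω} [IsProbabilityMeasure P]

/-- Core covering lemma. -/
lemma null_of_Ioc (μ : Measure ℝ) (r : ℝ) {B : Set ℝ}
    (hB : ∀ y ∈ B, r < y ∧ μ (Set.Ioc r y) = 0) : μ B = 0 := by
  classical
  set N : Set ℝ := ⋃ (s : ℚ) (_ : r < (s : ℝ) ∧ μ (Set.Ioc r (s : ℝ)) = 0),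
    Set.Ioc r (s : ℝ) with hN
  have hNnull : μ N = 0 :=
    measure_iUnion_null fun s => measure_iUnion_null fun hs => hs.2
  have key : ∀ y₁ ∈ B \ N, ∀ y₂ ∈ B \ N, y₁ < y₂ → False := by
    intro y₁ h₁ y₂ h₂ h12
    obtain ⟨s, hs1, hs2⟩ := exists_rat_btwn h12
    apply h₁.2
    refine Set.mem_iUnion.2 ⟨s, Set.mem_iUnion.2 ⟨⟨lt_trans (hB y₁ h₁.1).1 hs1, ?_⟩,
      ⟨(hB y₁ h₁.1).1, le_of_lt hs1⟩⟩⟩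
    exact measure_mono_null (Set.Ioc_subset_Ioc_right hs2.le) (hB y₂ h₂.1).2
  have hsub : (B \ N).Subsingleton := by
    intro y₁ h₁ y₂ h₂
    by_contra hne
    rcases lt_or_gt_of_ne hne with h | h
    · exact key _ h₁ _ h₂ h
    · exact key _ h₂ _ h₁ h
  have hBN : μ (B \ N) = 0 := by
    rcases hsub.eq_empty_or_singleton with h | ⟨y, h⟩
    · rw [h]; exact measure_empty
    · rw [h]
      have hy : y ∈ B := by
        have hmem : y ∈ B \ N := by rw [h]; exact Set.mem_singleton y
        exact hmem.1
      refine measure_mono_null ?_ (hB y hy).2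
      intro x hx
      rw [Set.mem_singleton_iff] at hx
      rw [hx]
      exact ⟨(hB y hy).1, le_rfl⟩
  refine le_antisymm ?_ zero_le
  calc μ B ≤ μ (N ∪ (B \ N)) := measure_mono (by
        intro x hx
        by_cases h : x ∈ N
        · exact Or.inl h
        · exact Or.inr ⟨hx, h⟩)
    _ ≤ μ N + μ (B \ N) := measure_union_le _ _
    _ ≤ 0 := by rw [hNnull, hBN, add_zero]

/-- The set of points lying strictly inside a "flat part" of the cdf. -/
def flatSet {Ω : Type*} [MeasurableSpace Ω] (P : Measure Ω) (W : Ω → ℝ) : Set ℝ :=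
  {t | ∃ x, x < t ∧ cdf P W x = cdf P W t}

lemma flatSet_eq {Ω : Type*} [MeasurableSpace Ω] (P : Measure Ω) [IsFiniteMeasure P] (W : Ω → ℝ) :
    flatSet P W = ⋃ (r : ℚ), (Set.Ioi (r : ℝ) ∩ (cdf P W) ⁻¹' {cdf P W (r : ℝ)}) := by
  ext t
  constructor
  · rintro ⟨x, hxt, hx⟩
    obtain ⟨r, hr1, hr2⟩ := exists_rat_btwn hxt
    refine Set.mem_iUnion.2 ⟨r, hr2, ?_⟩
    have h1 : cdf P W x ≤ cdf P W r := monotone_cdf P W hr1.le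
    have h2 : cdf P W (r : ℝ) ≤ cdf P W t := monotone_cdf P W hr2.le
    simp only [Set.mem_preimage, Set.mem_singleton_iff]
    exact le_antisymm (hx ▸ h1) h2
  · intro ht
    obtain ⟨r, hr1, hr2⟩ := Set.mem_iUnion.1 ht
    exact ⟨r, hr1, (Set.mem_singleton_iff.1 hr2).symm⟩

lemma measurableSet_flatSet {Ω : Type*} [MeasurableSpace Ω] (P : Measure Ω) [IsFiniteMeasure P] (W : Ω → ℝ) :
    MeasurableSet (flatSet P W) := by
  rw [flatSet_eq]
  exact MeasurableSet.iUnion fun r =>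
    measurableSet_Ioi.inter (measurable_cdf P W (measurableSet_singleton _))

lemma cdf_eq_map {W : Ω → ℝ} (hW : Measurable W) (w : ℝ) :
    cdf P W w = ((P.map W) (Set.Iic w)).toReal := by
  rw [Measure.map_apply hW measurableSet_Iic]
  rfl

lemma cdf_eq_iff_Ioc {W : Ω → ℝ} (hW : Measurable W) {x t : ℝ} (hxt : x < t) :
    cdf P W x = cdf P W t ↔ P.map W (Set.Ioc x t) = 0 := by
  have hsplit : P.map W (Set.Iic t) = P.map W (Set.Iic x) + P.map W (Set.Ioc x t) := by
    rw [← measure_union (Set.Iic_disjoint_Ioc le_rfl) measurableSet_Ioc,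
      Set.Iic_union_Ioc_eq_Iic hxt.le]
  rw [cdf_eq_map hW, cdf_eq_map hW]
  constructor
  · intro h
    have h' : P.map W (Set.Iic x) = P.map W (Set.Iic t) :=
      (ENNReal.toReal_eq_toReal_iff' (measure_ne_top _ _) (measure_ne_top _ _)).1 h
    rw [hsplit] at h'
    nth_rewrite 1 [← add_zero (P.map W (Set.Iic x))] at h'
    exact ((ENNReal.add_right_inj (measure_ne_top _ _)).1 h').symm
  · intro h
    rw [hsplit, h, add_zero]

lemma flatSet_null {W : Ω → ℝ} (hW : Measurable W) : P.map W (flatSet P W) = 0 := by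
  rw [flatSet_eq]
  refine measure_iUnion_null fun r => ?_
  refine null_of_Ioc (P.map W) (r : ℝ) ?_
  rintro y ⟨hy1, hy2⟩
  simp only [Set.mem_preimage, Set.mem_singleton_iff] at hy2
  exact ⟨hy1, (cdf_eq_iff_Ioc hW hy1).1 hy2.symm⟩

/-- For a.e. `y` (w.r.t. the law of `W`), the super-level sets of `W` and of `cdf ∘ W`
coincide exactly. -/
lemma ae_upperset {W : Ω → ℝ} (hW : Measurable W) :
    ∀ᵐ y ∂(P.map W), {ω | cdf P W y ≤ cdf P W (W ω)} = {ω | y ≤ W ω} := by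
  have h : ∀ᵐ y ∂(P.map W), y ∉ flatSet P W :=
    (ae_iff.2 (by simpa using flatSet_null hW))
  filter_upwards [h] with y hy
  ext ω
  simp only [Set.mem_setOf_eq]
  constructor
  · intro h'
    by_contra hlt
    push_neg at hlt
    exact hy ⟨W ω, hlt, le_antisymm (monotone_cdf P W hlt.le) h'⟩
  · exact fun h' => monotone_cdf P W h'

lemma symmDiff_Iic_null {W : Ω → ℝ} (hW : Measurable W) (a : ℝ) :
    P ({ω | W ω ≤ a} ∆ {ω | cdf P W (W ω) ≤ cdf P W a}) = 0 := by
  have hsub : {ω | W ω ≤ a} ⊆ {ω | cdf P W (W ω) ≤ cdf P W a} :=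
    fun ω h => monotone_cdf P W h
  rw [symmDiff_of_le hsub]
  have hsub2 : ({ω | cdf P W (W ω) ≤ cdf P W a} \ {ω | W ω ≤ a}) ⊆ W ⁻¹' (flatSet P W) := by
    rintro ω ⟨h1, h2⟩
    simp only [Set.mem_setOf_eq] at h1 h2
    push_neg at h2
    exact ⟨a, h2, le_antisymm (monotone_cdf P W h2.le) h1⟩
  refine measure_mono_null hsub2 ?_
  rw [← Measure.map_apply hW (measurableSet_flatSet P W)]
  exact flatSet_null hW

end ACaux

section Part2

open scoped symmDiff

variable {Ω : Type*}

lemma variance_congr [MeasurableSpace Ω] {P : Measure Ω} {f g : Ω → ℝ} (h : f =ᵐ[P] g) :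
    variance f P = variance g P := by
  unfold ProbabilityTheory.variance ProbabilityTheory.evariance
  rw [integral_congr_ae h]
  congr 1
  refine lintegral_congr_ae (h.mono fun ω hω => ?_)
  simp only [hω]

lemma condexp_ae_eq_of_approx {m' m : MeasurableSpace Ω} [inst : MeasurableSpace Ω]
    {P : Measure Ω} [IsProbabilityMeasure P] {f : Ω → ℝ} (hf : Integrable f P)
    (hm'm : m' ≤ m) (hm : m ≤ inst)
    (happrox : ∀ s, MeasurableSet[m] s → ∃ t, MeasurableSet[m'] t ∧ P (s ∆ t) = 0) :
    P[f|m'] =ᵐ[P] P[f|m] := by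
  have hm' : m' ≤ inst := hm'm.trans hm
  refine ae_eq_condExp_of_forall_setIntegral_eq hm hf
    (fun s _ _ => integrable_condExp.integrableOn) (fun s hs _ => ?_)
    (stronglyMeasurable_condExp.mono hm'm).aestronglyMeasurable
  obtain ⟨t, htm', hst⟩ := happrox s hs
  have hst' : s =ᵐ[P] t := measure_symmDiff_eq_zero_iff.mp hst
  calc ∫ x in s, (P[f|m']) x ∂P = ∫ x in t, (P[f|m']) x ∂P := setIntegral_congr_set hst'
    _ = ∫ x in t, f x ∂P := setIntegral_condExp hm' hf htm'
    _ = ∫ x in s, f x ∂P := (setIntegral_congr_set hst').symm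

lemma indicator_le_one (s : Set Ω) (ω : Ω) :
    Set.indicator s (fun _ => (1 : ℝ)) ω ≤ 1 := by
  classical
  by_cases h : ω ∈ s <;> simp [Set.indicator_of_mem, Set.indicator_of_notMem, h]

lemma integrable_indicator_one [MeasurableSpace Ω] {P : Measure Ω} [IsProbabilityMeasure P]
    {s : Set Ω} (hs : MeasurableSet s) :
    Integrable (Set.indicator s (fun _ => (1 : ℝ))) P :=
  (integrable_const (1 : ℝ)).indicator hs

lemma memℒp_indicator_one [MeasurableSpace Ω] {P : Measure Ω} [IsProbabilityMeasure P]
    {s : Set Ω} (hs : MeasurableSet s) :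
    MemLp (Set.indicator s (fun _ => (1 : ℝ))) 2 P := by
  refine MemLp.of_bound (aestronglyMeasurable_const.indicator hs) 1 (ae_of_all _ fun ω => ?_)
  rw [Real.norm_eq_abs, abs_le]
  constructor
  · refine le_trans (by norm_num) (Set.indicator_nonneg (fun _ _ => zero_le_one) ω)
  · exact indicator_le_one s ω

lemma sq_indicator_one (s : Set Ω) :
    (Set.indicator s (fun _ => (1 : ℝ))) ^ 2 = Set.indicator s (fun _ => (1 : ℝ)) := by
  classical
  funext ω
  by_cases h : ω ∈ s <;>
    simp [Set.indicator_of_mem, Set.indicator_of_notMem, h]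

lemma integral_indicator_one' [MeasurableSpace Ω] {P : Measure Ω} [IsProbabilityMeasure P]
    {s : Set Ω} (hs : MeasurableSet s) :
    ∫ ω, Set.indicator s (fun _ => (1 : ℝ)) ω ∂P = (P s).toReal := by
  rw [integral_indicator hs, setIntegral_const, smul_eq_mul, mul_one]
  rfl

lemma variance_indicator_one [MeasurableSpace Ω] {P : Measure Ω} [IsProbabilityMeasure P]
    {s : Set Ω} (hs : MeasurableSet s) :
    variance (Set.indicator s (fun _ => (1 : ℝ))) P = (P s).toReal - ((P s).toReal) ^ 2 := by
  rw [variance_eq_sub (memℒp_indicator_one hs)]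
  have h1 : P[(Set.indicator s (fun _ => (1 : ℝ))) ^ 2] = (P s).toReal := by
    rw [sq_indicator_one]; exact integral_indicator_one' hs
  have h2 : P[Set.indicator s (fun _ => (1 : ℝ))] = (P s).toReal := integral_indicator_one' hs
  rw [h1, h2]

/-- Bounds for the conditional expectation of an indicator. -/
lemma condexp_indicator_bounds {m : MeasurableSpace Ω} [inst : MeasurableSpace Ω]
    {P : Measure Ω} [IsProbabilityMeasure P] {s : Set Ω} (hs : MeasurableSet s)
    (hm : m ≤ inst) :
    (0 ≤ᵐ[P] P[Set.indicator s (fun _ => (1 : ℝ))|m]) ∧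
    (P[Set.indicator s (fun _ => (1 : ℝ))|m] ≤ᵐ[P] fun _ => (1 : ℝ)) := by
  constructor
  · exact condExp_nonneg (ae_of_all _ (Set.indicator_nonneg (fun _ _ => zero_le_one)))
  · have h := condExp_mono (μ := P) (m := m) (integrable_indicator_one hs)
      (integrable_const (1 : ℝ)) (ae_of_all _ (indicator_le_one s))
    rwa [condExp_const hm (1 : ℝ)] at h

lemma memℒp_condexp_indicator {m : MeasurableSpace Ω} [inst : MeasurableSpace Ω]
    {P : Measure Ω} [IsProbabilityMeasure P] {s : Set Ω} (hs : MeasurableSet s)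
    (hm : m ≤ inst) :
    MemLp (P[Set.indicator s (fun _ => (1 : ℝ))|m]) 2 P := by
  obtain ⟨h0, h1⟩ := condexp_indicator_bounds (P := P) hs hm
  refine MemLp.of_bound (stronglyMeasurable_condExp.mono hm).aestronglyMeasurable 1 ?_
  filter_upwards [h0, h1] with ω hω0 hω1
  rw [Real.norm_eq_abs, abs_le]
  exact ⟨le_trans (by norm_num) hω0, hω1⟩

/-- The numerator integrand of `xiSigma` is a measurable function of `y`. -/
lemma measurable_num_integrand {m : MeasurableSpace Ω} [inst : MeasurableSpace Ω]
    {P : Measure Ω} [IsProbabilityMeasure P] {W : Ω → ℝ} (hW : Measurable W)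
    (hm : m ≤ inst) :
    Measurable (fun y =>
      variance (P[Set.indicator {ω | y ≤ W ω} (fun _ => (1 : ℝ))|m]) P) := by
  have hsmeas : ∀ y : ℝ, MeasurableSet {ω | y ≤ W ω} :=
    fun y => measurableSet_le measurable_const hW
  have hvar : ∀ y : ℝ, variance (P[Set.indicator {ω | y ≤ W ω} (fun _ => (1 : ℝ))|m]) P =
      (∫ ω, ((P[Set.indicator {ω' | y ≤ W ω'} (fun _ => (1 : ℝ))|m]) ω) ^ 2 ∂P)
        - ((P {ω | y ≤ W ω}).toReal) ^ 2 := by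
    intro y
    have h2' : P[P[Set.indicator {ω | y ≤ W ω} (fun _ => (1 : ℝ))|m]]
        = (P {ω | y ≤ W ω}).toReal := by
      rw [integral_condExp hm]
      exact integral_indicator_one' (hsmeas y)
    rw [variance_eq_sub (memℒp_condexp_indicator (hsmeas y) hm), h2']
    rfl
  have hA : Antitone (fun y : ℝ =>
      ∫ ω, ((P[Set.indicator {ω' | y ≤ W ω'} (fun _ => (1 : ℝ))|m]) ω) ^ 2 ∂P) := by
    intro y y' hyy'
    have hsub : {ω | y' ≤ W ω} ⊆ {ω | y ≤ W ω} := fun ω h => le_trans hyy' h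
    have hle : P[Set.indicator {ω' | y' ≤ W ω'} (fun _ => (1 : ℝ))|m]
        ≤ᵐ[P] P[Set.indicator {ω' | y ≤ W ω'} (fun _ => (1 : ℝ))|m] := by
      refine condExp_mono (integrable_indicator_one (hsmeas y'))
        (integrable_indicator_one (hsmeas y)) (ae_of_all _ fun ω => ?_)
      exact Set.indicator_le_indicator_of_subset hsub (fun _ => zero_le_one) ω
    have h0 : 0 ≤ᵐ[P] P[Set.indicator {ω' | y' ≤ W ω'} (fun _ => (1 : ℝ))|m] :=
      (condexp_indicator_bounds (P := P) (hsmeas y') hm).1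
    refine integral_mono_ae (memℒp_condexp_indicator (hsmeas y') hm).integrable_sq
      (memℒp_condexp_indicator (hsmeas y) hm).integrable_sq ?_
    filter_upwards [hle, h0] with ω h1 h2
    exact pow_le_pow_left₀ h2 h1 2
  have hB : Antitone (fun y : ℝ => (P {ω | y ≤ W ω}).toReal) := by
    intro y y' hyy'
    exact ENNReal.toReal_mono (measure_ne_top P _)
      (measure_mono fun ω h => le_trans hyy' h)
  simp only [hvar]
  exact hA.measurable.sub (hB.measurable.pow_const 2)

/-- The denominator integrand of `xiSigma` is a measurable function of `y`. -/
lemma measurable_den_integrand [MeasurableSpace Ω] {P : Measure Ω} [IsProbabilityMeasure P]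
    {W : Ω → ℝ} (hW : Measurable W) :
    Measurable (fun y => variance (Set.indicator {ω | y ≤ W ω} (fun _ => (1 : ℝ))) P) := by
  have hsmeas : ∀ y : ℝ, MeasurableSet {ω | y ≤ W ω} :=
    fun y => measurableSet_le measurable_const hW
  have hvar : ∀ y : ℝ, variance (Set.indicator {ω | y ≤ W ω} (fun _ => (1 : ℝ))) P =
      (P {ω | y ≤ W ω}).toReal - ((P {ω | y ≤ W ω}).toReal) ^ 2 :=
    fun y => variance_indicator_one (hsmeas y)
  have hB : Antitone (fun y : ℝ => (P {ω | y ≤ W ω}).toReal) := by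
    intro y y' hyy'
    exact ENNReal.toReal_mono (measure_ne_top P _)
      (measure_mono fun ω h => le_trans hyy' h)
  simp only [hvar]
  exact hB.measurable.sub (hB.measurable.pow_const 2)

end Part2

section Part3

open scoped symmDiff

variable {Ω : Type*}

/-- The σ-algebra of sets that agree with an `m'`-measurable set up to a `P`-null set. -/
def aeClass (m' : MeasurableSpace Ω) [MeasurableSpace Ω] (P : Measure Ω) :
    MeasurableSpace Ω where
  MeasurableSet' s := ∃ t, MeasurableSet[m'] t ∧ P (s ∆ t) = 0
  measurableSet_empty := ⟨∅, @MeasurableSet.empty Ω m', by simp⟩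
  measurableSet_compl := fun s ⟨t, ht, hst⟩ => ⟨tᶜ, ht.compl, by rwa [compl_symmDiff_compl]⟩
  measurableSet_iUnion := fun f hf => by
    choose t ht hnull using hf
    refine ⟨⋃ n, t n, MeasurableSet.iUnion ht, ?_⟩
    refine measure_mono_null ?_ (measure_iUnion_null hnull)
    intro x hx
    rcases Set.mem_symmDiff.1 hx with ⟨hf1, hnt⟩ | ⟨ht1, hnf⟩
    · obtain ⟨n, hfn⟩ := Set.mem_iUnion.1 hf1
      exact Set.mem_iUnion.2 ⟨n, Set.mem_symmDiff.2
        (Or.inl ⟨hfn, fun h => hnt (Set.mem_iUnion.2 ⟨n, h⟩)⟩)⟩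
    · obtain ⟨n, htn⟩ := Set.mem_iUnion.1 ht1
      exact Set.mem_iUnion.2 ⟨n, Set.mem_symmDiff.2
        (Or.inr ⟨htn, fun h => hnf (Set.mem_iUnion.2 ⟨n, h⟩)⟩)⟩

lemma measurableSet_aeClass {m' : MeasurableSpace Ω} [MeasurableSpace Ω] {P : Measure Ω}
    {s : Set Ω} :
    MeasurableSet[aeClass m' P] s ↔ ∃ t, MeasurableSet[m'] t ∧ P (s ∆ t) = 0 :=
  Iff.rfl

/-- A real random variable is `aeClass m' P`-measurable as soon as each of the sets
`{W ≤ a}` is, up to null sets, in `m'`. -/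
lemma measurable_aeClass_of_Iic {m' : MeasurableSpace Ω} [inst : MeasurableSpace Ω]
    {P : Measure Ω} {W : Ω → ℝ}
    (h : ∀ a : ℝ, ∃ t, MeasurableSet[m'] t ∧ P ({ω | W ω ≤ a} ∆ t) = 0) :
    @Measurable Ω ℝ (aeClass m' P) _ W := by
  refine measurable_of_Iic fun a => ?_
  exact h a

/-- The comap σ-algebra of `cdf P W ∘ W` approximates, up to null sets,
the comap σ-algebra of `W`. -/
lemma exists_approx_Iic [inst : MeasurableSpace Ω] {P : Measure Ω} [IsProbabilityMeasure P]
    {W : Ω → ℝ} (hW : Measurable W) (a : ℝ) :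
    ∃ t, MeasurableSet[MeasurableSpace.comap (fun ω => cdf P W (W ω)) inferInstance] t ∧
      P ({ω | W ω ≤ a} ∆ t) = 0 := by
  refine ⟨{ω | cdf P W (W ω) ≤ cdf P W a}, ⟨Set.Iic (cdf P W a), measurableSet_Iic, rfl⟩, ?_⟩
  exact ACaux.symmDiff_Iic_null hW a

/-- Main transport lemma for `xiSigma`. -/
lemma xiSigma_invariance {m' m : MeasurableSpace Ω} [inst : MeasurableSpace Ω]
    {P : Measure Ω} [IsProbabilityMeasure P] {W : Ω → ℝ} (hW : Measurable W)
    (hm'm : m' ≤ m) (hm : m ≤ inst)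
    (happrox : ∀ s, MeasurableSet[m] s → ∃ t, MeasurableSet[m'] t ∧ P (s ∆ t) = 0) :
    xiSigma m' P (fun ω => cdf P W (W ω)) = xiSigma m P W := by
  have hm' : m' ≤ inst := hm'm.trans hm
  have hF : Measurable (cdf P W) := ACaux.measurable_cdf P W
  have hFW : Measurable (fun ω => cdf P W (W ω)) := hF.comp hW
  have hsmeas : ∀ y : ℝ, MeasurableSet {ω | y ≤ W ω} :=
    fun y => measurableSet_le measurable_const hW
  -- the numerator integrands
  have hI'meas : Measurable (fun z =>
      variance (P[Set.indicator {ω | z ≤ cdf P W (W ω)} (fun _ => (1 : ℝ))|m']) P) :=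
    measurable_num_integrand hFW hm'
  have hI0meas : Measurable (fun y =>
      variance (P[Set.indicator {ω | y ≤ W ω} (fun _ => (1 : ℝ))|m]) P) :=
    measurable_num_integrand hW hm
  have hJ'meas : Measurable (fun z =>
      variance (Set.indicator {ω | z ≤ cdf P W (W ω)} (fun _ => (1 : ℝ))) P) :=
    measurable_den_integrand hFW
  have hJ0meas : Measurable (fun y =>
      variance (Set.indicator {ω | y ≤ W ω} (fun _ => (1 : ℝ))) P) :=
    measurable_den_integrand hW
  -- a.e. equality of the numerator integrands
  have hnumae : ∀ᵐ y ∂(P.map W),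
      variance (P[Set.indicator {ω | cdf P W y ≤ cdf P W (W ω)} (fun _ => (1 : ℝ))|m']) P
        = variance (P[Set.indicator {ω | y ≤ W ω} (fun _ => (1 : ℝ))|m]) P := by
    filter_upwards [ACaux.ae_upperset hW] with y hy
    rw [hy]
    exact _root_.variance_congr
      (condexp_ae_eq_of_approx (integrable_indicator_one (hsmeas y)) hm'm hm happrox)
  have hdenae : ∀ᵐ y ∂(P.map W),
      variance (Set.indicator {ω | cdf P W y ≤ cdf P W (W ω)} (fun _ => (1 : ℝ))) P
        = variance (Set.indicator {ω | y ≤ W ω} (fun _ => (1 : ℝ))) P := by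
    filter_upwards [ACaux.ae_upperset hW] with y hy
    rw [hy]
  have hnum : (∫ z, variance (P[Set.indicator {ω | z ≤ cdf P W (W ω)}
        (fun _ => (1 : ℝ))|m']) P ∂(P.map (fun ω => cdf P W (W ω))))
      = ∫ y, variance (P[Set.indicator {ω | y ≤ W ω} (fun _ => (1 : ℝ))|m]) P ∂(P.map W) := by
    rw [integral_map hFW.aemeasurable hI'meas.aestronglyMeasurable,
      integral_map hW.aemeasurable hI0meas.aestronglyMeasurable]
    exact integral_congr_ae (ae_of_ae_map hW.aemeasurable hnumae)
  have hden : (∫ z, variance (Set.indicator {ω | z ≤ cdf P W (W ω)}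
        (fun _ => (1 : ℝ))) P ∂(P.map (fun ω => cdf P W (W ω))))
      = ∫ y, variance (Set.indicator {ω | y ≤ W ω} (fun _ => (1 : ℝ))) P ∂(P.map W) := by
    rw [integral_map hFW.aemeasurable hJ'meas.aestronglyMeasurable,
      integral_map hW.aemeasurable hJ0meas.aestronglyMeasurable]
    exact integral_congr_ae (ae_of_ae_map hW.aemeasurable hdenae)
  unfold xiSigma
  rw [hnum, hden]

end Part3


lemma comap_le_aeClass_of_cdf {Ω : Type*} {m' : MeasurableSpace Ω} [inst : MeasurableSpace Ω]
    {P : Measure Ω} [IsProbabilityMeasure P] {W : Ω → ℝ} (hW : Measurable W)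
    (hm' : MeasurableSpace.comap (fun ω => _root_.cdf P W (W ω)) inferInstance ≤ m') :
    MeasurableSpace.comap W inferInstance ≤ aeClass m' P := by
  intro s hs
  obtain ⟨A, hA, rfl⟩ := hs
  have hmeas : @Measurable Ω ℝ (aeClass m' P) _ W := by
    refine measurable_aeClass_of_Iic fun a => ?_
    obtain ⟨t, ht, hnull⟩ := exists_approx_Iic (P := P) hW a
    exact ⟨t, hm' _ ht, hnull⟩
  exact hmeas hA

lemma comap_pi_le_aeClass {Ω : Type*} {m' : MeasurableSpace Ω} [inst : MeasurableSpace Ω]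
    {P : Measure Ω} [IsProbabilityMeasure P] {p : ℕ} {X : Ω → Fin p → ℝ} (hX : Measurable X)
    (hm' : ∀ j : Fin p, MeasurableSpace.comap
        (fun ω => _root_.cdf P (fun ω' => X ω' j) (X ω j)) inferInstance ≤ m') :
    MeasurableSpace.comap X inferInstance ≤ aeClass m' P := by
  intro s hs
  obtain ⟨A, hA, rfl⟩ := hs
  have hmeas : @Measurable Ω (Fin p → ℝ) (aeClass m' P) _ X := by
    refine (@measurable_pi_iff Ω (Fin p) (fun _ => ℝ) (aeClass m' P) _ X).mpr fun j => ?_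
    refine measurable_aeClass_of_Iic fun a => ?_
    obtain ⟨t, ht, hnull⟩ := exists_approx_Iic (P := P) ((measurable_pi_apply j).comp hX) a
    exact ⟨t, hm' j _ ht, hnull⟩
  exact hmeas hA

theorem T_distributional_invariance
    {Ω : Type*} [MeasurableSpace Ω] (P : Measure Ω) [IsProbabilityMeasure P]
    {p q : ℕ} (X : Ω → (Fin p → ℝ)) (Y : Fin q → Ω → ℝ)
    (hX : Measurable X) (hY : ∀ i, Measurable (Y i))
    (hnd : ∀ i, Nondegenerate P (Y i)) :
    T P Y X =
      T P (fun i => fun ω => cdf P (Y i) (Y i ω))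
        (fun ω => fun j => cdf P (fun ω' => X ω' j) (X ω j)) := by
  classical
  have hXj : ∀ j, Measurable fun ω => X ω j := fun j => (measurable_pi_apply j).comp hX
  set X' : Ω → Fin p → ℝ := fun ω j => cdf P (fun ω' => X ω' j) (X ω j) with hX'
  set Y' : Fin q → Ω → ℝ := fun i ω => cdf P (Y i) (Y i ω) with hY'
  have hcomapY' : ∀ j : Fin q, MeasurableSpace.comap (Y' j) inferInstance ≤
      MeasurableSpace.comap (Y j) inferInstance := by
    intro j s hs
    obtain ⟨A, hA, rfl⟩ := hs
    exact ⟨cdf P (Y j) ⁻¹' A, ACaux.measurable_cdf P (Y j) hA, rfl⟩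
  have hcomapX' : MeasurableSpace.comap X' inferInstance ≤
      MeasurableSpace.comap X inferInstance := by
    intro s hs
    obtain ⟨A, hA, rfl⟩ := hs
    exact ⟨(fun v : Fin p → ℝ => fun j => cdf P (fun ω' => X ω' j) (v j)) ⁻¹' A,
      (measurable_pi_lambda _ fun j =>
        (ACaux.measurable_cdf P _).comp (measurable_pi_apply j)) hA, rfl⟩
  have hpast' : ∀ i, sigmaPast Y' i ≤ sigmaPast Y i :=
    fun i => iSup_mono fun j => iSup_mono fun _ => hcomapY' j
  have hpast_le : ∀ i, sigmaPast Y i ≤ ‹MeasurableSpace Ω› :=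
    fun i => iSup_le fun j => iSup_le fun _ => (hY j).comap_le
  have hYle : ∀ j i : Fin q, j < i →
      MeasurableSpace.comap (Y' j) inferInstance ≤ sigmaPast Y' i := by
    intro j i hji
    exact le_trans
      (le_iSup (fun _ : j < i => MeasurableSpace.comap (Y' j) inferInstance) hji)
      (le_iSup (fun j' : Fin q =>
        ⨆ _ : j' < i, MeasurableSpace.comap (Y' j') inferInstance) j)
  have hXcoordle : ∀ j : Fin p,
      MeasurableSpace.comap (fun ω => cdf P (fun ω' => X ω' j) (X ω j)) inferInstance ≤
        MeasurableSpace.comap X' inferInstance := by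
    intro j s hs
    obtain ⟨B, hB, rfl⟩ := hs
    exact ⟨(fun v : Fin p → ℝ => v j) ⁻¹' B, measurable_pi_apply j hB, rfl⟩
  have key1 : ∀ i : Fin q,
      xiSigma (MeasurableSpace.comap X' inferInstance ⊔ sigmaPast Y' i) P (Y' i)
        = xiSigma (MeasurableSpace.comap X inferInstance ⊔ sigmaPast Y i) P (Y i) := by
    intro i
    refine xiSigma_invariance (hY i) (sup_le_sup hcomapX' (hpast' i))
      (sup_le hX.comap_le (hpast_le i)) ?_
    have hle : (MeasurableSpace.comap X inferInstance ⊔ sigmaPast Y i) ≤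
        aeClass (MeasurableSpace.comap X' inferInstance ⊔ sigmaPast Y' i) P := by
      refine sup_le (comap_pi_le_aeClass hX
        (fun j => le_trans (hXcoordle j) le_sup_left)) ?_
      refine iSup_le fun j => iSup_le fun hji => ?_
      exact comap_le_aeClass_of_cdf (hY j) (le_trans (hYle j i hji) le_sup_right)
    exact fun s hs => hle s hs
  have key2 : ∀ i : Fin q,
      xiSigma (sigmaPast Y' i) P (Y' i) = xiSigma (sigmaPast Y i) P (Y i) := by
    intro i
    refine xiSigma_invariance (hY i) (hpast' i) (hpast_le i) ?_
    have hle : sigmaPast Y i ≤ aeClass (sigmaPast Y' i) P := by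
      refine iSup_le fun j => iSup_le fun hji => ?_
      exact comap_le_aeClass_of_cdf (hY j) (hYle j i hji)
    exact fun s hs => hle s hs
  simp only [T]
  rw [Finset.sum_congr rfl (fun i _ => key1 i), Finset.sum_congr rfl (fun i _ => key2 i)]
end

section
/- Let X be an ℝ^p-valued random vector and Y a real-valued random variable on a common probability space. Then the integral transform ψ_{Y|X}(y,y') := ∫_Ω E[1_{{Y ≤ y}} | X] · E[1_{{Y ≤ y'}} | X] dP, for y, y' ∈ ℝ, is a bivariate distribution function, i.e., there exists a probability measure on ℝ² whose distribution function equals ψ_{Y|X}; namely, ψ_{Y|X} is the distribution function of a bivariate random vector (Y, Y*) such that (X, Y*) and (X, Y) have the same distribution and Y and Y* are conditionally independent given X. -/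
open MeasureTheory ProbabilityTheory

/-- The integral transform `ψ_{Y|X}(y,y') = ∫_Ω E[1_{Y ≤ y} | X] · E[1_{Y ≤ y'} | X] dP`. -/
noncomputable def psi {Ω α : Type*} [MeasurableSpace Ω] [MeasurableSpace α]
    (P : Measure Ω) (Y : Ω → ℝ) (X : Ω → α) (y y' : ℝ) : ℝ :=
  ∫ ω,
    (MeasureTheory.condExp (MeasurableSpace.comap X inferInstance) P
        (Set.indicator {ω' | Y ω' ≤ y} (fun _ => (1 : ℝ))) ω) *
    (MeasureTheory.condExp (MeasurableSpace.comap X inferInstance) P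
        (Set.indicator {ω' | Y ω' ≤ y'} (fun _ => (1 : ℝ))) ω) ∂P

section Aux

open MeasureTheory ProbabilityTheory

variable {Ω : Type*} [MeasurableSpace Ω] {P : Measure Ω} [IsProbabilityMeasure P]
  {p : ℕ} {X : Ω → (Fin p → ℝ)} {Y : Ω → ℝ}

lemma aux_compProd_condDistrib (hX : Measurable X) (hY : Measurable Y) :
    (P.map X) ⊗ₘ condDistrib Y X P = P.map (fun ω => (X ω, Y ω)) := by
  rw [condDistrib, ← Measure.fst_map_prodMk (X := X) hY, Measure.disintegrate]

end Aux

theorem psi_is_bivariate_distribution_function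
    {Ω : Type*} [MeasurableSpace Ω] (P : Measure Ω) [IsProbabilityMeasure P]
    {p : ℕ} (X : Ω → (Fin p → ℝ)) (Y : Ω → ℝ)
    (hX : Measurable X) (hY : Measurable Y) :
    -- ψ_{Y|X} is the distribution function of a probability measure μ on ℝ²; namely, μ is
    -- the law of a bivariate random vector (Y, Y*) — realized as the last two coordinates
    -- of a probability measure `Q` on ℝ^p × ℝ × ℝ — such that (X, Y*) and (X, Y) have the
    -- same distribution and Y and Y* are conditionally independent given X.
    ∃ μ : Measure (ℝ × ℝ), IsProbabilityMeasure μ ∧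
      (∀ y y' : ℝ, psi P Y X y y' = (μ (Set.Iic y ×ˢ Set.Iic y')).toReal) ∧
      ∃ (Q : Measure ((Fin p → ℝ) × ℝ × ℝ)) (_ : IsProbabilityMeasure Q),
        Q.map (fun z => z.2) = μ ∧
        Q.map (fun z => (z.1, z.2.1)) = P.map (fun ω => (X ω, Y ω)) ∧
        Q.map (fun z => (z.1, z.2.2)) = P.map (fun ω => (X ω, Y ω)) ∧
        CondIndepFun (MeasurableSpace.comap Prod.fst inferInstance) measurable_fst.comap_le
          (fun z => z.2.1) (fun z => z.2.2) Q := by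
  classical
  set ν : Measure (Fin p → ℝ) := P.map X with hν
  haveI hνprob : IsProbabilityMeasure ν := Measure.isProbabilityMeasure_map hX.aemeasurable
  set κ : Kernel (Fin p → ℝ) ℝ := condDistrib Y X P with hκdef
  set η : Kernel (Fin p → ℝ) (ℝ × ℝ) := κ ×ₖ κ with hηdef
  haveI : IsMarkovKernel η := by rw [hηdef]; infer_instance
  set Q : Measure ((Fin p → ℝ) × ℝ × ℝ) := ν ⊗ₘ η with hQ
  haveI hQprob : IsProbabilityMeasure Q := by rw [hQ]; infer_instance
  have hcomp : ν ⊗ₘ κ = P.map (fun ω => (X ω, Y ω)) := aux_compProd_condDistrib hX hY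
  -- value of η on rectangles
  have hηval : ∀ (x : Fin p → ℝ) (s t : Set ℝ), η x (s ×ˢ t) = κ x s * κ x t := by
    intro x s t
    rw [hηdef, Kernel.prod_apply, Measure.prod_prod]
  -- the marginal maps
  have hm1 : Measurable (fun z : (Fin p → ℝ) × ℝ × ℝ => (z.1, z.2.1)) :=
    measurable_fst.prodMk (measurable_fst.comp measurable_snd)
  have hm2 : Measurable (fun z : (Fin p → ℝ) × ℝ × ℝ => (z.1, z.2.2)) :=
    measurable_fst.prodMk (measurable_snd.comp measurable_snd)
  have hmap : ∀ (f : (Fin p → ℝ) × ℝ × ℝ → (Fin p → ℝ) × ℝ) (hf : Measurable f)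
      (hpre : ∀ (s : Set (Fin p → ℝ)) (t : Set ℝ), MeasurableSet s → MeasurableSet t →
        Q (f ⁻¹' (s ×ˢ t)) = ∫⁻ x in s, κ x t ∂ν),
      Q.map f = ν ⊗ₘ κ := by
    intro f hf hpre
    refine ext_of_generate_finite _ generateFrom_prod.symm
      isPiSystem_prod ?_ ?_
    · rintro _ ⟨s, hs, t, ht, rfl⟩
      have hs' : MeasurableSet s := hs
      have ht' : MeasurableSet t := ht
      rw [Measure.map_apply hf (hs'.prod ht'), hpre s t hs' ht',
        Measure.compProd_apply_prod hs' ht']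
    · simp [Measure.map_apply hf MeasurableSet.univ]
  have hmap1 : Q.map (fun z => (z.1, z.2.1)) = P.map (fun ω => (X ω, Y ω)) := by
    rw [← hcomp]
    refine hmap _ hm1 (fun s t hs ht => ?_)
    have hpre : (fun z : (Fin p → ℝ) × ℝ × ℝ => (z.1, z.2.1)) ⁻¹' (s ×ˢ t)
        = s ×ˢ (t ×ˢ Set.univ) := by
      ext z; simp [Set.mem_prod, and_assoc]
    rw [hpre, hQ, Measure.compProd_apply_prod hs (ht.prod MeasurableSet.univ)]
    refine setLIntegral_congr_fun hs (fun x _ => ?_)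
    rw [hηval, measure_univ, mul_one]
  have hmap2 : Q.map (fun z => (z.1, z.2.2)) = P.map (fun ω => (X ω, Y ω)) := by
    rw [← hcomp]
    refine hmap _ hm2 (fun s t hs ht => ?_)
    have hpre : (fun z : (Fin p → ℝ) × ℝ × ℝ => (z.1, z.2.2)) ⁻¹' (s ×ˢ t)
        = s ×ˢ (Set.univ ×ˢ t) := by
      ext z; simp [Set.mem_prod]
    rw [hpre, hQ, Measure.compProd_apply_prod hs (MeasurableSet.univ.prod ht)]
    refine setLIntegral_congr_fun hs (fun x _ => ?_)
    rw [hηval, measure_univ, one_mul]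
  -- the measure μ
  refine ⟨Q.map (fun z => z.2), Measure.isProbabilityMeasure_map measurable_snd.aemeasurable, ?_, Q,
    hQprob, rfl, hmap1, hmap2, ?_⟩
  · -- ψ is the distribution function
    intro y y'
    have hmeasg : Measurable fun x => (κ x (Set.Iic y)).toReal * (κ x (Set.Iic y')).toReal :=
      ((κ.measurable_coe measurableSet_Iic).ennreal_toReal).mul
        ((κ.measurable_coe measurableSet_Iic).ennreal_toReal)
    have hcd : ∀ b : ℝ, (fun ω => (κ (X ω) (Set.Iic b)).toReal) =ᵐ[P]
        P⟦Y ⁻¹' Set.Iic b | MeasurableSpace.comap X inferInstance⟧ := fun b =>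
      condDistrib_ae_eq_condExp hX hY measurableSet_Iic
    have h1 : psi P Y X y y'
        = ∫ ω, (κ (X ω) (Set.Iic y)).toReal * (κ (X ω) (Set.Iic y')).toReal ∂P := by
      rw [psi]
      refine (integral_congr_ae ?_).symm
      filter_upwards [hcd y, hcd y'] with ω h1 h2
      have e1 : Y ⁻¹' Set.Iic y = {ω' | Y ω' ≤ y} := rfl
      have e2 : Y ⁻¹' Set.Iic y' = {ω' | Y ω' ≤ y'} := rfl
      rw [e1] at h1; rw [e2] at h2
      rw [h1, h2]
    have h2 : ∫ ω, (κ (X ω) (Set.Iic y)).toReal * (κ (X ω) (Set.Iic y')).toReal ∂P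
        = ∫ x, (κ x (Set.Iic y)).toReal * (κ x (Set.Iic y')).toReal ∂ν := by
      rw [hν, integral_map hX.aemeasurable hmeasg.aestronglyMeasurable]
    have h3 : (Q.map (fun z => z.2)) (Set.Iic y ×ˢ Set.Iic y')
        = ∫⁻ x, κ x (Set.Iic y) * κ x (Set.Iic y') ∂ν := by
      rw [Measure.map_apply measurable_snd (measurableSet_Iic.prod measurableSet_Iic)]
      have hpre : (Prod.snd : (Fin p → ℝ) × ℝ × ℝ → ℝ × ℝ) ⁻¹' (Set.Iic y ×ˢ Set.Iic y')
          = Set.univ ×ˢ (Set.Iic y ×ˢ Set.Iic y') := by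
        ext z; simp [Set.mem_prod]
      rw [hpre, hQ, Measure.compProd_apply_prod MeasurableSet.univ
        (measurableSet_Iic.prod measurableSet_Iic), setLIntegral_univ]
      exact lintegral_congr fun x => hηval x _ _
    rw [h1, h2, h3, ← integral_toReal (show AEMeasurable (fun x => κ x (Set.Iic y) * κ x (Set.Iic y')) ν from ((κ.measurable_coe measurableSet_Iic).mul
        (κ.measurable_coe measurableSet_Iic)).aemeasurable)
      (ae_of_all _ fun x => ENNReal.mul_lt_top (measure_lt_top _ _) (measure_lt_top _ _))]
    exact integral_congr_ae (ae_of_all _ fun x => (ENNReal.toReal_mul).symm)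
  · -- conditional independence
    have hfstQ : Q.map Prod.fst = ν := Measure.fst_compProd ν η
    have hQeq : Q.map (fun z : (Fin p → ℝ) × ℝ × ℝ => (z.1, z.2)) = Q.map Prod.fst ⊗ₘ η := by
      simp only [Prod.mk.eta, hfstQ, Measure.map_id']
      exact hQ
    have hae : ∀ᵐ x ∂Q.map Prod.fst, η x = condDistrib Prod.snd Prod.fst Q x :=
      (condDistrib_ae_eq_of_measure_eq_compProd Prod.fst measurable_snd.aemeasurable hQeq).symm
    have haeQ : ∀ᵐ z ∂Q, η z.1 = condDistrib Prod.snd Prod.fst Q z.1 :=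
      ae_of_ae_map measurable_fst.aemeasurable hae
    have hkey : ∀ (A : Set (ℝ × ℝ)), MeasurableSet A →
        (Q⟦Prod.snd ⁻¹' A | MeasurableSpace.comap Prod.fst inferInstance⟧)
          =ᵐ[Q] fun z => (η z.1 A).toReal := by
      intro A hA
      have h1 : (fun z : (Fin p → ℝ) × ℝ × ℝ => (condDistrib Prod.snd Prod.fst Q z.1 A).toReal) =ᵐ[Q]
          Q⟦Prod.snd ⁻¹' A | MeasurableSpace.comap Prod.fst inferInstance⟧ := condDistrib_ae_eq_condExp (μ := Q) measurable_fst measurable_snd hA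
      refine h1.symm.trans ?_
      filter_upwards [haeQ] with z hz
      rw [hz]
    rw [condIndepFun_iff_condExp_inter_preimage_eq_mul
      (measurable_snd.fst : Measurable fun z : (Fin p → ℝ) × ℝ × ℝ => z.2.1)
      (measurable_snd.snd : Measurable fun z : (Fin p → ℝ) × ℝ × ℝ => z.2.2)]
    intro s t hs ht
    have e1 : (fun z : (Fin p → ℝ) × ℝ × ℝ => z.2.1) ⁻¹' s ∩ (fun z => z.2.2) ⁻¹' t
        = Prod.snd ⁻¹' (s ×ˢ t) := by ext z; simp [Set.mem_prod]
    have e2 : (fun z : (Fin p → ℝ) × ℝ × ℝ => z.2.1) ⁻¹' s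
        = Prod.snd ⁻¹' (s ×ˢ Set.univ) := by ext z; simp [Set.mem_prod]
    have e3 : (fun z : (Fin p → ℝ) × ℝ × ℝ => z.2.2) ⁻¹' t
        = Prod.snd ⁻¹' (Set.univ ×ˢ t) := by ext z; simp [Set.mem_prod]
    rw [e1, e2, e3]
    filter_upwards [hkey (s ×ˢ t) (hs.prod ht), hkey (s ×ˢ Set.univ) (hs.prod MeasurableSet.univ),
      hkey (Set.univ ×ˢ t) (MeasurableSet.univ.prod ht)] with z h1 h2 h3
    rw [h1, h2, h3, hηval, hηval, hηval, measure_univ, mul_one, one_mul, ENNReal.toReal_mul]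
end
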